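/- For every integer n ≥ 1 and all t ∈ ℝ, the polynomials A_n satisfy the recurrence t²·A_n''(t) + t·A_n'(t) − n²·A_n(t) = t²·A_{n−2}''(t) + t·A_{n−2}'(t). -/

import Mathlib

/-- The polynomial `A_n(t) = ((−1)^n/n!) ∑_{k=0}^{⌊n/2⌋} (−1)^k C(n,k) (k − n/2)^n t^{n−2k}`,
with the convention `A_0 ≡ 0` (negative indices are handled by truncated subtraction,
which is harmless since `A_0 ≡ 0`). -/
noncomputable def A (n : ℕ) (t : ℝ) : ℝ :=
  if n = 0 then 0 else
    ((-1 : ℝ) ^ n / Nat.factorial n) *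
      ∑ k ∈ Finset.range (n / 2 + 1),
        (-1 : ℝ) ^ k * (Nat.choose n k) * ((k : ℝ) - n / 2) ^ n * t ^ (n - 2 * k)

/-- The coefficient of `t^(n-2k)` in `A n`. -/
noncomputable def c (n k : ℕ) : ℝ :=
  (-1 : ℝ) ^ n / Nat.factorial n * ((-1 : ℝ) ^ k * (Nat.choose n k) * ((k : ℝ) - n / 2) ^ n)

lemma A_eval (n : ℕ) (hn : n ≠ 0) :
    A n = fun t => ∑ k ∈ Finset.range (n / 2 + 1), c n k * t ^ (n - 2 * k) := by
  funext t
  simp only [A, if_neg hn, Finset.mul_sum]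
  exact Finset.sum_congr rfl fun k _ => by rw [c]; ring

lemma deriv_msum (s : Finset ℕ) (co : ℕ → ℝ) (m : ℕ → ℕ) :
    deriv (fun x : ℝ => ∑ k ∈ s, co k * x ^ m k)
      = fun t => ∑ k ∈ s, co k * (m k : ℝ) * t ^ (m k - 1) := by
  funext t
  exact (HasDerivAt.fun_sum fun k _ => by
    simpa [mul_assoc] using (hasDerivAt_pow (m k) t).const_mul (co k)).deriv

lemma helper (m : ℕ) (co t : ℝ) :
    t ^ 2 * (co * (m : ℝ) * ((m - 1 : ℕ) : ℝ) * t ^ (m - 1 - 1))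
      + t * (co * (m : ℝ) * t ^ (m - 1)) = co * (m : ℝ) ^ 2 * t ^ m := by
  match m with
  | 0 => simp
  | 1 => norm_num; ring
  | (p+2) =>
    simp only [Nat.add_sub_cancel, show p + 2 - 1 = p + 1 from rfl, Nat.add_sub_cancel]
    push_cast
    ring

lemma combine (s : Finset ℕ) (co : ℕ → ℝ) (m : ℕ → ℕ) (t : ℝ) :
    t ^ 2 * deriv (deriv (fun x : ℝ => ∑ k ∈ s, co k * x ^ m k)) t
      + t * deriv (fun x : ℝ => ∑ k ∈ s, co k * x ^ m k) t
      = ∑ k ∈ s, co k * (m k : ℝ) ^ 2 * t ^ m k := by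
  rw [deriv_msum s co m, deriv_msum s (fun k => co k * (m k : ℝ)) (fun k => m k - 1)]
  rw [Finset.mul_sum, Finset.mul_sum, ← Finset.sum_add_distrib]
  exact Finset.sum_congr rfl fun k _ => helper (m k) (co k) t

lemma combineA (n : ℕ) (hn : n ≠ 0) (t : ℝ) :
    t ^ 2 * deriv (deriv (A n)) t + t * deriv (A n) t
      = ∑ k ∈ Finset.range (n / 2 + 1), c n k * ((n - 2 * k : ℕ) : ℝ) ^ 2 * t ^ (n - 2 * k) := by
  rw [A_eval n hn]
  exact combine (Finset.range (n / 2 + 1)) (c n) (fun k => n - 2 * k) t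

lemma nat_key (m j : ℕ) (h : j ≤ m) :
    (j+1) * (m+1-j) * Nat.choose (m+2) (j+1) * Nat.factorial m
      = Nat.choose m j * Nat.factorial (m+2) := by
  have h1 := Nat.choose_mul_factorial_mul_factorial (show j+1 ≤ m+2 by omega)
  have h2 := Nat.choose_mul_factorial_mul_factorial h
  have e1 : m + 2 - (j+1) = (m - j) + 1 := by omega
  have e2 : m + 1 - j = (m - j) + 1 := by omega
  rw [e1] at h1
  rw [e2]
  refine Nat.eq_of_mul_eq_mul_right
    (Nat.mul_pos (Nat.factorial_pos j) (Nat.factorial_pos (m-j))) ?_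
  calc (j+1) * (m-j+1) * Nat.choose (m+2) (j+1) * Nat.factorial m
        * (Nat.factorial j * Nat.factorial (m-j))
      = (Nat.choose (m+2) (j+1) * ((j+1) * Nat.factorial j)
          * ((m-j+1) * Nat.factorial (m-j))) * Nat.factorial m := by ring
    _ = (Nat.choose (m+2) (j+1) * Nat.factorial (j+1) * Nat.factorial (m-j+1))
          * Nat.factorial m := by rw [Nat.factorial_succ, Nat.factorial_succ]
    _ = Nat.factorial (m+2) * Nat.factorial m := by rw [h1]
    _ = Nat.factorial (m+2) * (Nat.choose m j * Nat.factorial j * Nat.factorial (m-j)) := by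
          rw [h2]
    _ = Nat.choose m j * Nat.factorial (m+2) * (Nat.factorial j * Nat.factorial (m-j)) := by
          ring

lemma term_eq (m j : ℕ) (hj : 2*j ≤ m) (t : ℝ) :
    c (m+2) (j+1) * (((m+2 - 2*(j+1) : ℕ) : ℝ) ^ 2 - ((m+2 : ℕ) : ℝ) ^ 2) * t ^ (m+2-2*(j+1))
      = c m j * ((m - 2*j : ℕ) : ℝ) ^ 2 * t ^ (m - 2*j) := by
  have he : m+2-2*(j+1) = m - 2*j := by omega
  rw [he]
  congr 1
  have hjm : j ≤ m := by omega
  have hFne : (Nat.factorial m : ℝ) ≠ 0 := by positivity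
  have hF2 : (Nat.factorial (m+2) : ℝ) = ((m:ℝ)+2) * ((m:ℝ)+1) * Nat.factorial m := by
    rw [Nat.factorial_succ, Nat.factorial_succ]; push_cast; ring
  have hC' : ((j:ℝ)+1) * ((m:ℝ)+1-j) * ((m+2).choose (j+1))
      = (m.choose j) * (((m:ℝ)+2) * ((m:ℝ)+1)) := by
    apply mul_right_cancel₀ hFne
    have hnat := nat_key m j hjm
    have hcast := congrArg (Nat.cast (R := ℝ)) hnat
    rw [Nat.cast_mul, Nat.cast_mul, Nat.cast_mul, Nat.cast_mul,
      Nat.cast_sub (by omega : j ≤ m + 1)] at hcast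
    push_cast at hcast
    rw [hF2] at hcast
    linarith [hcast]
  have hsub : ((m - 2*j : ℕ) : ℝ) = (m:ℝ) - 2*j := by
    rw [Nat.cast_sub hj]; push_cast; ring
  simp only [c, hsub]
  push_cast
  have hpow : ((j:ℝ) + 1 - ((m:ℝ)+2)/2) = (j:ℝ) - (m:ℝ)/2 := by ring
  rw [hpow, pow_add ((j:ℝ) - (m:ℝ)/2) m 2, pow_add ((-1:ℝ)) m 2,
    pow_succ ((-1:ℝ)) j,
    show ((j:ℝ) - (m:ℝ)/2)^2 = ((m:ℝ) - 2*j)^2/4 by ring, hF2]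
  have h1 : ((m:ℝ)+2) ≠ 0 := by positivity
  have h2 : ((m:ℝ)+1) ≠ 0 := by positivity
  generalize ((j:ℝ) - (m:ℝ)/2)^m = P
  field_simp
  linear_combination (4 * P * ((m:ℝ) - 2*(j:ℝ))^2) * hC'

/-- For every `n ≥ 1`, `t² A_n'' + t A_n' − n² A_n = t² A_{n−2}'' + t A_{n−2}'`. -/
theorem A_recurrence (n : ℕ) (hn : 1 ≤ n) (t : ℝ) :
    t ^ 2 * deriv (deriv (A n)) t + t * deriv (A n) t - (n : ℝ) ^ 2 * A n t =
      t ^ 2 * deriv (deriv (A (n - 2))) t + t * deriv (A (n - 2)) t := by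
  have hn0 : n ≠ 0 := by omega
  have hA0 : A 0 = fun _ => (0:ℝ) := by funext x; simp [A]
  have hAt : A n t = ∑ k ∈ Finset.range (n / 2 + 1), c n k * t ^ (n - 2 * k) :=
    congrFun (A_eval n hn0) t
  rw [combineA n hn0 t, hAt, Finset.mul_sum, ← Finset.sum_sub_distrib]
  have hsum : ∑ k ∈ Finset.range (n / 2 + 1),
        (c n k * ((n - 2*k : ℕ) : ℝ) ^ 2 * t ^ (n - 2*k)
          - (n:ℝ)^2 * (c n k * t ^ (n - 2*k)))
      = ∑ k ∈ Finset.range (n / 2 + 1),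
        c n k * (((n - 2*k : ℕ) : ℝ) ^ 2 - (n:ℝ)^2) * t ^ (n - 2*k) :=
    Finset.sum_congr rfl fun k _ => by ring
  rw [hsum, Finset.sum_range_succ']
  have hz : c n 0 * (((n - 2*0 : ℕ) : ℝ) ^ 2 - (n:ℝ)^2) * t ^ (n - 2*0) = 0 := by
    norm_num
  rw [hz, add_zero]
  by_cases h3 : 3 ≤ n
  · have h2 : n - 2 ≠ 0 := by omega
    rw [combineA (n-2) h2 t]
    have hr : (n-2)/2 + 1 = n/2 := by omega
    rw [hr]
    refine Finset.sum_congr rfl fun j hj => ?_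
    have hj' : 2*j + 2 ≤ n := by
      have := Finset.mem_range.mp hj
      omega
    obtain ⟨m, rfl⟩ : ∃ m, n = m + 2 := ⟨n-2, by omega⟩
    have := term_eq m j (by omega) t
    simpa [Nat.add_sub_cancel] using this
  · interval_cases n
    · rw [show (1:ℕ) - 2 = 0 from rfl, hA0]
      simp
    · rw [show (2:ℕ) - 2 = 0 from rfl, hA0]
      simp [Finset.sum_range_succ, c]
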